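/- Let G be the cycle graph on n ≥ 3 vertices. Then the resolving topological index of G equals n(n−1)/(n² − 2n + 2) when n is even, and equals n/(n−1) when n is odd. -/

import Mathlib

open Finset

variable {V : Type*} [Fintype V] [DecidableEq V]

/-- The resolving neighborhood `R(u,v)`: the set of vertices resolving the pair `(u,v)`. -/
noncomputable def resolvingNbhd (G : SimpleGraph V) (u v : V) : Finset V :=
  Finset.univ.filter fun x => G.dist u x ≠ G.dist v x

/-- The resolving share `r_w(u,v)` of a vertex `w` for the pair `(u,v)`. -/
noncomputable def rShare (G : SimpleGraph V) (w u v : V) : ℚ :=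
  if G.dist u w ≠ G.dist v w then 1 / (resolvingNbhd G u v).card else 0

/-- The resolvent neighborhood of `w`, as ordered pairs. Since `rShare` is symmetric
in the pair, averaging over ordered pairs agrees with averaging over unordered pairs. -/
noncomputable def resolventNbhd (G : SimpleGraph V) (w : V) : Finset (V × V) :=
  Finset.univ.filter fun p => p.1 ≠ p.2 ∧ G.dist p.1 w ≠ G.dist p.2 w

/-- The average resolving share `ar_w(G)` of `w` in `G`. -/
noncomputable def arShare (G : SimpleGraph V) (w : V) : ℚ :=
  (∑ p ∈ resolventNbhd G w, rShare G w p.1 p.2) / (resolventNbhd G w).card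

/-- The resolving topological index `𝓡(G)`. -/
noncomputable def rIndex (G : SimpleGraph V) : ℚ :=
  ∑ w : V, arShare G w


section CycleAux
open SimpleGraph
variable {n : ℕ}
open Finset SimpleGraph

variable {n : ℕ}

private lemma mod_two_cases {k n : ℕ} (hn : 0 < n) (hk : k < 2*n) :
    k % n = if k < n then k else k - n := by
  split_ifs with h
  · exact Nat.mod_eq_of_lt h
  · rw [Nat.mod_eq_sub_mod (le_of_not_gt h), Nat.mod_eq_of_lt (by omega)]

section withNZ
variable [NeZero n]

private lemma fin_val_one (hn : 2 ≤ n) : (1 : Fin n).val = 1 := by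
  rw [Fin.val_one']; exact Nat.mod_eq_of_lt (by omega)

private lemma fin_val_sub_one (hn : 2 ≤ n) (a : Fin n) :
    (a - 1).val = if a.val = 0 then n - 1 else a.val - 1 := by
  rw [Fin.sub_def]
  have ha := a.isLt
  show (n - (1:Fin n).val + a.val) % n = _
  rw [fin_val_one hn, mod_two_cases (n := n) (by omega) (by omega)]
  split_ifs <;> omega

private lemma fin_val_add_one (hn : 2 ≤ n) (a : Fin n) :
    (a + 1).val = if a.val = n - 1 then 0 else a.val + 1 := by
  rw [Fin.add_def]
  have ha := a.isLt
  show (a.val + (1:Fin n).val) % n = _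
  rw [fin_val_one hn, mod_two_cases (n := n) (by omega) (by omega)]
  split_ifs <;> omega

private lemma cycle_connected (hn : 2 ≤ n) : (cycleGraph n).Connected := by
  obtain ⟨m, rfl⟩ : ∃ m, n = m + 1 := ⟨n - 1, by omega⟩
  exact cycleGraph_connected

private lemma cycle_dist_ub (hn : 2 ≤ n) : ∀ (k : ℕ) (u v : Fin n), (v - u).val = k →
    (cycleGraph n).dist u v ≤ k := by
  intro k
  induction k with
  | zero =>
    intro u v h
    have : v - u = 0 := Fin.ext (by simpa using h)
    have : v = u := by rwa [sub_eq_zero] at this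
    simp [this]
  | succ k ih =>
    intro u v h
    have hvu' : (v - u).val ≠ 0 := by omega
    have hadj : (cycleGraph n).Adj u (u + 1) := by
      rw [cycleGraph_adj']
      right
      rw [add_sub_cancel_left, fin_val_one hn]
    have hw : (v - (u + 1)).val = k := by
      have heq : v - (u + 1) = (v - u) - 1 := by abel
      rw [heq, fin_val_sub_one hn, if_neg hvu']
      omega
    calc (cycleGraph n).dist u v
        ≤ (cycleGraph n).dist u (u+1) + (cycleGraph n).dist (u+1) v :=
          (cycle_connected hn).dist_triangle
    _ ≤ 1 + k := by
        gcongr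
        · exact le_of_eq (dist_eq_one_iff_adj.mpr hadj)
        · exact ih (u+1) v hw
    _ = k + 1 := by omega

end withNZ

section withNZ2
variable [NeZero n]

private lemma cycle_dist_lb (hn : 2 ≤ n) {u v : Fin n} (p : (cycleGraph n).Walk u v) :
    min (v - u).val (n - (v - u).val) ≤ p.length := by
  induction p with
  | nil => simp
  | @cons u w v h q ih =>
    rw [Walk.length_cons]
    rw [cycleGraph_adj'] at h
    have key : ∀ b : Fin n,
        min b.val (n - b.val) ≤ min (b - 1).val (n - (b - 1).val) + 1 ∧
        min b.val (n - b.val) ≤ min (b + 1).val (n - (b + 1).val) + 1 := by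
      intro b
      have hb := b.isLt
      rw [fin_val_sub_one hn, fin_val_add_one hn]
      split_ifs <;> omega
    rcases h with h | h
    · -- (u - w).val = 1, so u = w + 1, w = u - 1, v - w = (v - u) + 1
      have huw : u - w = 1 := Fin.ext (by rw [h, fin_val_one hn])
      have : v - w = (v - u) + 1 := by
        rw [← huw]; abel
      rw [this] at ih
      have := (key (v - u)).2
      omega
    · have hwu : w - u = 1 := Fin.ext (by rw [h, fin_val_one hn])
      have : v - w = (v - u) - 1 := by
        rw [← hwu]; abel
      rw [this] at ih
      have := (key (v - u)).1
      omega

private lemma cycle_dist (hn : 2 ≤ n) (u v : Fin n) :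
    (cycleGraph n).dist u v = min (v - u).val (n - (v - u).val) := by
  apply le_antisymm
  · rcases eq_or_ne u v with rfl | huv
    · simp
    · have h1 : (cycleGraph n).dist u v ≤ (v - u).val := cycle_dist_ub hn _ u v rfl
      have h2 : (cycleGraph n).dist u v ≤ (u - v).val := by
        rw [SimpleGraph.dist_comm]; exact cycle_dist_ub hn _ v u rfl
      have h3 : (u - v).val = n - (v - u).val := by
        have hne : v - u ≠ 0 := sub_ne_zero_of_ne (Ne.symm huv)
        have : u - v = -(v - u) := by abel
        rw [this, Fin.coe_neg, Nat.mod_eq_of_lt]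
        have : (v - u).val ≠ 0 := fun h0 => hne (Fin.ext (by simpa using h0))
        omega
      omega
  · obtain ⟨p, hp⟩ := (cycle_connected hn).exists_walk_length_eq_dist u v
    rw [← hp]
    exact cycle_dist_lb hn p

private lemma cycle_dist_eq_iff (hn : 2 ≤ n) (x u v : Fin n) :
    (cycleGraph n).dist u x = (cycleGraph n).dist v x ↔ u = v ∨ u + v = x + x := by
  rw [cycle_dist hn, cycle_dist hn]
  set a := x - u with ha
  set b := x - v with hb
  have h1 : (u = v) ↔ a.val = b.val := by
    rw [Fin.val_eq_val]
    exact (sub_right_injective.eq_iff (a := u) (b := v)).symm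
  have h2 : (u + v = x + x) ↔ (a.val + b.val) % n = 0 := by
    have key : a + b = (x + x) - (u + v) := by rw [ha, hb]; abel
    have : u + v = x + x ↔ a + b = 0 := by
      rw [key, sub_eq_zero, eq_comm]
    rw [this, ← Fin.val_eq_val, Fin.add_def]
    show _ ↔ (a.val + b.val) % n = (0 : Fin n).val
    rw [Fin.val_zero]
  rw [h1, h2]
  have hav := a.isLt
  have hbv := b.isLt
  rw [mod_two_cases (n := n) (by omega) (by omega)]
  split_ifs <;> omega

end withNZ2

section counting
variable [NeZero n]

private lemma two_eq_iff (x c : Fin n) : x + x = c ↔ (x.val + x.val) % n = c.val := by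
  rw [← Fin.val_eq_val, Fin.add_def]

private lemma count_sol_odd (hn : 3 ≤ n) (hodd : n % 2 = 1) (c : Fin n) :
    (univ.filter fun x : Fin n => x + x = c).card = 1 := by
  have hc := c.isLt
  rcases Nat.mod_two_eq_zero_or_one c.val with h2 | h2
  · refine Finset.card_eq_one.mpr ⟨⟨c.val / 2, by omega⟩, ?_⟩
    ext x
    have hx := x.isLt
    simp only [mem_filter, mem_univ, true_and, mem_singleton, Fin.ext_iff, Fin.val_add]
    rw [mod_two_cases (n := n) (by omega) (by omega)]
    split_ifs <;> omega
  · refine Finset.card_eq_one.mpr ⟨⟨(c.val + n) / 2, by omega⟩, ?_⟩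
    ext x
    have hx := x.isLt
    simp only [mem_filter, mem_univ, true_and, mem_singleton, Fin.ext_iff, Fin.val_add]
    rw [mod_two_cases (n := n) (by omega) (by omega)]
    split_ifs <;> omega

private lemma count_sol_even_odd (hn : 3 ≤ n) (heven : n % 2 = 0) (c : Fin n)
    (hc2 : c.val % 2 = 1) : (univ.filter fun x : Fin n => x + x = c).card = 0 := by
  have hc := c.isLt
  rw [Finset.card_eq_zero, Finset.eq_empty_iff_forall_notMem]
  intro x
  have hx := x.isLt
  simp only [mem_filter, mem_univ, true_and, two_eq_iff, Fin.val_add]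
  rw [mod_two_cases (n := n) (by omega) (by omega)]
  split_ifs <;> omega

private lemma count_sol_even_even (hn : 3 ≤ n) (heven : n % 2 = 0) (c : Fin n)
    (hc2 : c.val % 2 = 0) : (univ.filter fun x : Fin n => x + x = c).card = 2 := by
  have hc := c.isLt
  refine Finset.card_eq_two.mpr ⟨⟨c.val / 2, by omega⟩, ⟨c.val / 2 + n / 2, by omega⟩,
    by simp [Fin.ext_iff]; omega, ?_⟩
  ext x
  have hx := x.isLt
  simp only [mem_filter, mem_univ, true_and, mem_insert, mem_singleton, Fin.ext_iff, Fin.val_add]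
  rw [mod_two_cases (n := n) (by omega) (by omega)]
  split_ifs <;> omega

end counting

private lemma range_filter_parity : ∀ m : ℕ,
    (((Finset.range m).filter fun k => k % 2 = 1).card = m / 2) ∧
    (((Finset.range m).filter fun k => k % 2 = 0).card = (m + 1) / 2) := by
  intro m
  induction m with
  | zero => simp
  | succ m ih =>
    rw [Finset.range_add_one, Finset.filter_insert, Finset.filter_insert]
    rcases Nat.mod_two_eq_zero_or_one m with h | h
    · rw [if_neg (by omega), if_pos h,
        Finset.card_insert_of_notMem (by simp), ih.1, ih.2]
      omega
    · rw [if_pos h, if_neg (by omega),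
        Finset.card_insert_of_notMem (by simp), ih.1, ih.2]
      omega

private lemma count_parity_fin (r : ℕ) :
    (univ.filter fun c : Fin n => c.val % 2 = r).card =
      ((Finset.range n).filter fun k => k % 2 = r).card := by
  rw [Finset.card_filter, Finset.card_filter,
    Fin.sum_univ_eq_sum_range (fun k => if k % 2 = r then 1 else 0)]

private lemma count_odd_fin (heven : n % 2 = 0) :
    (univ.filter fun c : Fin n => c.val % 2 = 1).card = n / 2 := by
  rw [count_parity_fin, (range_filter_parity n).1]

private lemma count_even_fin (heven : n % 2 = 0) :
    (univ.filter fun c : Fin n => c.val % 2 = 0).card = n / 2 := by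
  rw [count_parity_fin, (range_filter_parity n).2]
  omega

section trans
variable [NeZero n]

private lemma card_filter_addLeft (u : Fin n) (Q : Fin n → Prop) [DecidablePred Q] :
    (univ.filter fun v => Q (u + v)).card = (univ.filter Q).card := by
  apply Finset.card_bij' (fun v _ => u + v) (fun c _ => c - u)
  · intro a ha
    simpa using (Finset.mem_filter.mp ha).2
  · intro a ha
    simp only [mem_filter, mem_univ, true_and]
    rw [add_sub_cancel]
    exact (Finset.mem_filter.mp ha).2
  · intro a _; rw [add_sub_cancel_left]
  · intro a _; rw [add_sub_cancel]

private lemma filter_pair_eq (a b : Fin n) :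
    (univ.filter fun c : Fin n => c = a ∨ c = b) = {a, b} := by
  ext c; simp [mem_insert]

private lemma card_filter_ne_ne (a b : Fin n) :
    (univ.filter fun c : Fin n => c ≠ a ∧ c ≠ b).card = n - (if a = b then 1 else 2) := by
  have h : (univ.filter fun c : Fin n => c ≠ a ∧ c ≠ b) = univ \ {a, b} := by
    ext c; simp [not_or]
  rw [h, Finset.card_sdiff_of_subset (Finset.subset_univ _), Finset.card_univ, Fintype.card_fin]
  congr 1
  split_ifs with hab
  · subst hab; simp
  · exact Finset.card_pair hab

private lemma card_filter_even_ne_ne (heven : n % 2 = 0) (a b : Fin n)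
    (ha : a.val % 2 = 0) (hb : b.val % 2 = 0) :
    (univ.filter fun c : Fin n => c.val % 2 = 0 ∧ c ≠ a ∧ c ≠ b).card =
      n / 2 - (if a = b then 1 else 2) := by
  have h : (univ.filter fun c : Fin n => c.val % 2 = 0 ∧ c ≠ a ∧ c ≠ b) =
      (univ.filter fun c : Fin n => c.val % 2 = 0) \ {a, b} := by
    ext c; simp [not_or, and_assoc]
  rw [h, Finset.card_sdiff_of_subset, count_even_fin heven]
  · congr 1
    split_ifs with hab
    · subst hab; simp
    · exact Finset.card_pair hab
  · intro c hc
    simp only [mem_insert, mem_singleton] at hc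
    rcases hc with rfl | rfl <;> simp [ha, hb]

private lemma card_filter_odd_ne_ne (heven : n % 2 = 0) (a b : Fin n)
    (ha : a.val % 2 = 0) (hb : b.val % 2 = 0) :
    (univ.filter fun c : Fin n => c.val % 2 = 1 ∧ c ≠ a ∧ c ≠ b).card = n / 2 := by
  rw [← count_odd_fin (n := n) heven]
  apply congrArg
  apply Finset.filter_congr
  intro c _
  simp only [and_iff_left_iff_imp]
  intro hc
  constructor
  · intro h; rw [h] at hc; omega
  · intro h; rw [h] at hc; omega

end trans
section graphCount
variable [NeZero n] {V : Type*}

private lemma pair_card (Q : Fin n × Fin n → Prop) [DecidablePred Q] :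
    (univ.filter Q).card = ∑ u : Fin n, (univ.filter fun v => Q (u, v)).card := by
  simp only [Finset.card_filter]
  rw [Fintype.sum_prod_type]

end graphCount

section graphMain
variable [NeZero n]

private lemma resolvingNbhd_card (hn : 3 ≤ n) (u v : Fin n) (huv : u ≠ v) :
    (resolvingNbhd (cycleGraph n) u v).card
      = n - (univ.filter fun x : Fin n => x + x = u + v).card := by
  unfold resolvingNbhd
  have key : ∀ x : Fin n, ((cycleGraph n).dist u x ≠ (cycleGraph n).dist v x)
      ↔ ¬ (x + x = u + v) := by
    intro x
    rw [ne_eq, cycle_dist_eq_iff (by omega) x u v]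
    constructor
    · intro h hx; exact h (Or.inr hx.symm)
    · rintro h (h1 | h2)
      · exact huv h1
      · exact h h2.symm
  rw [Finset.filter_congr (fun x _ => key x), Finset.filter_not,
    Finset.card_sdiff_of_subset (Finset.filter_subset _ _), Finset.card_univ, Fintype.card_fin]

private lemma resolventNbhd_eq (hn : 3 ≤ n) (w : Fin n) :
    resolventNbhd (cycleGraph n) w =
      univ.filter fun p : Fin n × Fin n => p.1 ≠ p.2 ∧ p.1 + p.2 ≠ w + w := by
  unfold resolventNbhd
  apply Finset.filter_congr
  intro p _
  rw [ne_eq ((cycleGraph n).dist p.1 w), cycle_dist_eq_iff (by omega) w p.1 p.2]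
  tauto

private lemma inner_card (hn : 3 ≤ n) (u w : Fin n) :
    (univ.filter fun v : Fin n => u ≠ v ∧ u + v ≠ w + w).card
      = n - (if u + u = w + w then 1 else 2) := by
  have key : ∀ v : Fin n, (u ≠ v ∧ u + v ≠ w + w)
      ↔ ((u + v ≠ u + u ∧ u + v ≠ w + w)) := by
    intro v
    rw [ne_eq (u + v) (u + u), add_right_inj, eq_comm, ← ne_eq]
  rw [Finset.filter_congr (fun v _ => key v),
    card_filter_addLeft u (fun c => c ≠ u + u ∧ c ≠ w + w),
    card_filter_ne_ne]

private lemma sum_ite_card (P : Fin n → Prop) [DecidablePred P] :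
    ∑ u : Fin n, (if P u then (1:ℕ) else 0) = (univ.filter P).card :=
  (Finset.card_filter _ _).symm

private lemma resolventNbhd_card (hn : 3 ≤ n) (w : Fin n) :
    (resolventNbhd (cycleGraph n) w).card
      = n * (n - 2) + (univ.filter fun x : Fin n => x + x = w + w).card := by
  rw [resolventNbhd_eq hn w,
    pair_card (fun p : Fin n × Fin n => p.1 ≠ p.2 ∧ p.1 + p.2 ≠ w + w)]
  have key : ∀ u : Fin n,
      (univ.filter fun v : Fin n => (u, v).1 ≠ (u, v).2 ∧ (u, v).1 + (u, v).2 ≠ w + w).card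
      = (n - 2) + (if u + u = w + w then 1 else 0) := by
    intro u
    have h := inner_card hn u w
    have h2 : (univ.filter fun v : Fin n => (u, v).1 ≠ (u, v).2 ∧ (u, v).1 + (u, v).2 ≠ w + w)
        = (univ.filter fun v : Fin n => u ≠ v ∧ u + v ≠ w + w) := rfl
    rw [h2, h]
    split_ifs <;> omega
  rw [Finset.sum_congr rfl (fun u _ => key u), Finset.sum_add_distrib,
    Finset.sum_const, sum_ite_card, Finset.card_univ, Fintype.card_fin, smul_eq_mul]

private lemma arShare_odd (hn : 3 ≤ n) (hodd : n % 2 = 1) (w : Fin n) :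
    arShare (cycleGraph n) w = 1 / ((n : ℚ) - 1) := by
  have hcard : (resolventNbhd (cycleGraph n) w).card = n * (n - 2) + 1 := by
    rw [resolventNbhd_card hn w, count_sol_odd hn hodd]
  have hterm : ∀ p ∈ resolventNbhd (cycleGraph n) w,
      rShare (cycleGraph n) w p.1 p.2 = 1 / ((n : ℚ) - 1) := by
    intro p hp
    unfold resolventNbhd at hp
    simp only [Finset.mem_filter] at hp
    obtain ⟨-, hne, hd⟩ := hp
    unfold rShare
    rw [if_pos hd, resolvingNbhd_card hn _ _ hne, count_sol_odd hn hodd]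
    have : ((n - 1 : ℕ) : ℚ) = (n : ℚ) - 1 := by
      push_cast [Nat.cast_sub (by omega : 1 ≤ n)]
      ring
    rw [this]
  unfold arShare
  rw [Finset.sum_congr rfl hterm, Finset.sum_const, hcard, nsmul_eq_mul]
  have hC : ((n * (n - 2) + 1 : ℕ) : ℚ) ≠ 0 := by
    exact_mod_cast (by omega : (n * (n - 2) + 1 : ℕ) ≠ 0)
  rw [mul_comm, mul_div_assoc, div_self hC, mul_one]

private lemma val_two_even (hn : 3 ≤ n) (heven : n % 2 = 0) (w : Fin n) :
    (w + w).val % 2 = 0 := by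
  have h := w.isLt
  rw [Fin.val_add, mod_two_cases (n := n) (by omega) (by omega)]
  split_ifs <;> omega

private lemma resolventNbhd_even_card (hn : 3 ≤ n) (heven : n % 2 = 0) (w : Fin n) :
    ((resolventNbhd (cycleGraph n) w).filter fun p => (p.1 + p.2).val % 2 = 0).card
      = n * (n / 2 - 2) + 2 := by
  rw [resolventNbhd_eq hn w, Finset.filter_filter,
    pair_card (fun p : Fin n × Fin n =>
      (p.1 ≠ p.2 ∧ p.1 + p.2 ≠ w + w) ∧ (p.1 + p.2).val % 2 = 0)]
  have key : ∀ u : Fin n, (univ.filter fun v : Fin n =>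
        (((u, v).1 ≠ (u, v).2 ∧ (u, v).1 + (u, v).2 ≠ w + w) ∧
          ((u, v).1 + (u, v).2).val % 2 = 0)).card
      = (n / 2 - 2) + (if u + u = w + w then 1 else 0) := by
    intro u
    have h2 : (univ.filter fun v : Fin n =>
        (((u, v).1 ≠ (u, v).2 ∧ (u, v).1 + (u, v).2 ≠ w + w) ∧
          ((u, v).1 + (u, v).2).val % 2 = 0))
        = univ.filter fun v : Fin n =>
            (u + v).val % 2 = 0 ∧ u + v ≠ u + u ∧ u + v ≠ w + w := by
      apply Finset.filter_congr
      intro v _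
      show ((u ≠ v ∧ u + v ≠ w + w) ∧ (u + v).val % 2 = 0) ↔ _
      constructor
      · rintro ⟨⟨h1, hb⟩, h3⟩
        exact ⟨h3, fun h => h1 ((add_right_inj u).mp h).symm, hb⟩
      · rintro ⟨h3, h1, hb⟩
        exact ⟨⟨fun h => h1 (by rw [h]), hb⟩, h3⟩
    rw [h2, card_filter_addLeft u (fun c => c.val % 2 = 0 ∧ c ≠ u + u ∧ c ≠ w + w),
      card_filter_even_ne_ne heven _ _ (val_two_even hn heven u) (val_two_even hn heven w)]
    have h4 : 2 ≤ n / 2 := by omega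
    split_ifs <;> omega
  rw [Finset.sum_congr rfl (fun u _ => key u), Finset.sum_add_distrib,
    Finset.sum_const, sum_ite_card, Finset.card_univ, Fintype.card_fin, smul_eq_mul,
    count_sol_even_even hn heven _ (val_two_even hn heven w)]

private lemma resolventNbhd_odd_card (hn : 3 ≤ n) (heven : n % 2 = 0) (w : Fin n) :
    ((resolventNbhd (cycleGraph n) w).filter fun p => ¬ ((p.1 + p.2).val % 2 = 0)).card
      = n * (n / 2) := by
  rw [resolventNbhd_eq hn w, Finset.filter_filter,
    pair_card (fun p : Fin n × Fin n =>
      (p.1 ≠ p.2 ∧ p.1 + p.2 ≠ w + w) ∧ ¬ ((p.1 + p.2).val % 2 = 0))]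
  have key : ∀ u : Fin n, (univ.filter fun v : Fin n =>
        (((u, v).1 ≠ (u, v).2 ∧ (u, v).1 + (u, v).2 ≠ w + w) ∧
          ¬ (((u, v).1 + (u, v).2).val % 2 = 0))).card = n / 2 := by
    intro u
    have h2 : (univ.filter fun v : Fin n =>
        (((u, v).1 ≠ (u, v).2 ∧ (u, v).1 + (u, v).2 ≠ w + w) ∧
          ¬ (((u, v).1 + (u, v).2).val % 2 = 0)))
        = univ.filter fun v : Fin n =>
            (u + v).val % 2 = 1 ∧ u + v ≠ u + u ∧ u + v ≠ w + w := by
      apply Finset.filter_congr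
      intro v _
      show ((u ≠ v ∧ u + v ≠ w + w) ∧ ¬ ((u + v).val % 2 = 0)) ↔ _
      constructor
      · rintro ⟨⟨h1, hb⟩, h3⟩
        exact ⟨by omega, fun h => h1 ((add_right_inj u).mp h).symm, hb⟩
      · rintro ⟨h3, h1, hb⟩
        exact ⟨⟨fun h => h1 (by rw [h]), hb⟩, by omega⟩
    rw [h2, card_filter_addLeft u (fun c => c.val % 2 = 1 ∧ c ≠ u + u ∧ c ≠ w + w),
      card_filter_odd_ne_ne heven _ _ (val_two_even hn heven u) (val_two_even hn heven w)]
  rw [Finset.sum_congr rfl (fun u _ => key u), Finset.sum_const, Finset.card_univ,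
    Fintype.card_fin, smul_eq_mul]

private lemma arShare_even (hn : 3 ≤ n) (heven : n % 2 = 0) (w : Fin n) :
    arShare (cycleGraph n) w = ((n:ℚ) - 1) / ((n:ℚ)^2 - 2*(n:ℚ) + 2) := by
  have hcard : (resolventNbhd (cycleGraph n) w).card = n * (n - 2) + 2 := by
    rw [resolventNbhd_card hn w, count_sol_even_even hn heven _ (val_two_even hn heven w)]
  have hsum : ∑ p ∈ resolventNbhd (cycleGraph n) w, rShare (cycleGraph n) w p.1 p.2
      = ((n * (n / 2 - 2) + 2 : ℕ) : ℚ) * (1 / ((n:ℚ) - 2))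
        + ((n * (n / 2) : ℕ) : ℚ) * (1 / (n:ℚ)) := by
    rw [← Finset.sum_filter_add_sum_filter_not (resolventNbhd (cycleGraph n) w)
      (fun p => (p.1 + p.2).val % 2 = 0)]
    congr 1
    · have hterm : ∀ p ∈ (resolventNbhd (cycleGraph n) w).filter
          (fun p => (p.1 + p.2).val % 2 = 0),
          rShare (cycleGraph n) w p.1 p.2 = 1 / ((n:ℚ) - 2) := by
        intro p hp
        rw [Finset.mem_filter] at hp
        obtain ⟨hpA, hpar⟩ := hp
        unfold resolventNbhd at hpA
        simp only [Finset.mem_filter] at hpA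
        obtain ⟨-, hne, hd⟩ := hpA
        unfold rShare
        rw [if_pos hd, resolvingNbhd_card hn _ _ hne,
          count_sol_even_even hn heven _ hpar]
        have : ((n - 2 : ℕ) : ℚ) = (n : ℚ) - 2 := by
          push_cast [Nat.cast_sub (by omega : 2 ≤ n)]
          ring
        rw [this]
      rw [Finset.sum_congr rfl hterm, Finset.sum_const,
        resolventNbhd_even_card hn heven w, nsmul_eq_mul]
    · have hterm : ∀ p ∈ (resolventNbhd (cycleGraph n) w).filter
          (fun p => ¬ ((p.1 + p.2).val % 2 = 0)),
          rShare (cycleGraph n) w p.1 p.2 = 1 / (n:ℚ) := by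
        intro p hp
        rw [Finset.mem_filter] at hp
        obtain ⟨hpA, hpar⟩ := hp
        unfold resolventNbhd at hpA
        simp only [Finset.mem_filter] at hpA
        obtain ⟨-, hne, hd⟩ := hpA
        unfold rShare
        rw [if_pos hd, resolvingNbhd_card hn _ _ hne,
          count_sol_even_odd hn heven _ (by omega), Nat.sub_zero]
      rw [Finset.sum_congr rfl hterm, Finset.sum_const,
        resolventNbhd_odd_card hn heven w, nsmul_eq_mul]
  unfold arShare
  rw [hsum, hcard]
  obtain ⟨k, hk⟩ : ∃ k, n = 2 * k + 4 := ⟨(n - 4)/2, by omega⟩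
  have e1 : n * (n / 2 - 2) + 2 = (2*k+4)*k + 2 := by
    rw [show n / 2 - 2 = k by omega, hk]
  have e2 : n * (n / 2) = (2*k+4)*(k+2) := by
    rw [show n / 2 = k + 2 by omega, hk]
  have e3 : n * (n - 2) + 2 = (2*k+4)*(2*k+2)+2 := by
    rw [show n - 2 = 2*k+2 by omega, hk]
  have hn' : (n:ℚ) = 2*(k:ℚ)+4 := by rw [hk]; push_cast; ring
  rw [e1, e2, e3, hn']
  have hK : (0:ℚ) ≤ (k:ℚ) := Nat.cast_nonneg k
  have d1 : 2*(k:ℚ)+4 - 2 ≠ 0 := by nlinarith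
  have d2 : 2*(k:ℚ)+4 ≠ 0 := by nlinarith
  have d3 : (((2*k+4)*(2*k+2)+2 : ℕ) : ℚ) ≠ 0 := by
    push_cast
    nlinarith
  have d4 : (2*(k:ℚ)+4)^2 - 2*(2*(k:ℚ)+4) + 2 ≠ 0 := by nlinarith
  push_cast at d3 ⊢
  rw [div_eq_div_iff d3 d4]
  field_simp
  ring

end graphMain

end CycleAux

/-- The resolving topological index of the cycle on `n ≥ 3` vertices is
`n(n−1)/(n²−2n+2)` for even `n` and `n/(n−1)` for odd `n`. -/
theorem rIndex_cycleGraph (n : ℕ) (hn : 3 ≤ n) :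
    (Even n →
      rIndex (SimpleGraph.cycleGraph n) =
        (n : ℚ) * ((n : ℚ) - 1) / ((n : ℚ) ^ 2 - 2 * n + 2)) ∧
    (Odd n → rIndex (SimpleGraph.cycleGraph n) = (n : ℚ) / ((n : ℚ) - 1)) := by
  haveI : NeZero n := ⟨by omega⟩
  constructor
  · intro he
    have heven : n % 2 = 0 := Nat.even_iff.mp he
    unfold rIndex
    rw [Finset.sum_congr rfl (fun w _ => arShare_even hn heven w), Finset.sum_const,
      Finset.card_univ, Fintype.card_fin, nsmul_eq_mul]
    ring
  · intro ho
    have hodd : n % 2 = 1 := Nat.odd_iff.mp ho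
    unfold rIndex
    rw [Finset.sum_congr rfl (fun w _ => arShare_odd hn hodd w), Finset.sum_const,
      Finset.card_univ, Fintype.card_fin, nsmul_eq_mul]
    ring
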